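/- The map σ : W_{n-1} → S̃_n given by σ(x) = x − div(x)·x_nD_n is an injective homomorphism of Lie algebras, where an element x = Σ_{i=1}^{n-1} f_iD_i of W_{n-1} is viewed inside W_n via the inclusion B_{n-1} ⊆ B_n. -/

import Mathlib

open MvPolynomial Finset

/-- Evaluation of derivations at a point, as a `B`-linear map. -/
def evalDeriv (k B : Type*) [CommRing k] [CommRing B] [Algebra k B] (g : B) :
    Derivation k B B →ₗ[B] B where
  toFun d := d g
  map_add' _ _ := rfl
  map_smul' _ _ := rfl

@[simp] lemma evalDeriv_apply (k B : Type*) [CommRing k] [CommRing B] [Algebra k B]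
    (g : B) (d : Derivation k B B) : evalDeriv k B g d = d g := rfl

/-- The map `σ : W_{n-1} → S̃_n`, `σ(y) = y − div(y)·x_n D_n`, is an injective homomorphism of
Lie algebras.  Here `W_{n-1}` is realized inside `W_n` as the set of derivations
`y = Σ_{i<n} f_i D_i` whose `D_n`-component vanishes and whose coefficients do not involve
`x_n` (i.e. are killed by `D_n`). -/
theorem sigma_injective_lie_algebra_hom
    (k : Type*) [Field k] (p n : ℕ) [Fact (Nat.Prime p)] [CharP k p] (hp : 3 < p)
    (hn : 3 ≤ n)
    (B : Type*) [CommRing B] [Algebra k B]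
    (e : (MvPolynomial (Fin n) k ⧸
        Ideal.span (Set.range fun i : Fin n => (X i : MvPolynomial (Fin n) k) ^ p)) ≃ₐ[k] B)
    (x : Fin n → B) (hx : ∀ j, x j = e (Ideal.Quotient.mk _ (X j)))
    (D : Fin n → Derivation k B B) (hD : ∀ i j, D i (x j) = if i = j then 1 else 0)
    (b : Module.Basis (Fin n) B (Derivation k B B)) (hb : ∀ i, b i = D i)
    (div : Derivation k B B → B) (hdiv : ∀ y, div y = ∑ i, D i (b.repr y i))
    (ℓ : Fin n) (hℓ : (ℓ : ℕ) = n - 1)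
    -- `P y` says that `y` lies in the image of `W_{n-1} ⊆ W_n`
    (P : Derivation k B B → Prop)
    (hP : ∀ y, P y ↔ (b.repr y ℓ = 0 ∧ ∀ i, D ℓ (b.repr y i) = 0))
    (σ : Derivation k B B → Derivation k B B)
    (hσ : ∀ y, σ y = y - (div y * x ℓ) • D ℓ) :
    (∀ y, P y → div (σ y) = 0) ∧
      (∀ y z, P y → P z → σ y = σ z → y = z) ∧
      (∀ y z, P y → P z → σ ⁅y, z⁆ = ⁅σ y, σ z⁆) := by
  classical
  -- any derivation expands as `w g = ∑ i, repr w i * D i g`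
  have hexp0 : ∀ (w : Derivation k B B) (g : B),
      w g = ∑ i, b.repr w i * (D i) g := by
    intro w g
    conv_lhs => rw [← b.sum_repr w]
    rw [show ((∑ i, b.repr w i • b i : Derivation k B B)) g
        = evalDeriv k B g (∑ i, b.repr w i • b i) from rfl,
      map_sum]
    refine Finset.sum_congr rfl fun i _ => ?_
    rw [map_smul, hb]
    rfl
  -- reading off coefficients: `repr w j = w (x j)`
  have hrepr : ∀ (w : Derivation k B B) (j : Fin n), b.repr w j = w (x j) := by
    intro w j
    rw [hexp0 w (x j)]
    rw [Finset.sum_eq_single j]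
    · rw [hD]; simp
    · intro i _ hij; rw [hD]; simp [hij]
    · simp
  -- expansion with coefficients `w (x i)`
  have hexp : ∀ (w : Derivation k B B) (g : B),
      w g = ∑ i, w (x i) * (D i) g := by
    intro w g
    rw [hexp0 w g]
    exact Finset.sum_congr rfl fun i _ => by rw [hrepr]
  -- extensionality via values on the generators
  have hext : ∀ (w₁ w₂ : Derivation k B B), (∀ j, w₁ (x j) = w₂ (x j)) → w₁ = w₂ := by
    intro w₁ w₂ h
    apply b.repr.injective
    ext j
    rw [hrepr, hrepr, h]
  -- divergence in terms of values on generators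
  have hdiv' : ∀ w, div w = ∑ i, D i (w (x i)) := by
    intro w
    rw [hdiv]
    exact Finset.sum_congr rfl fun i _ => by rw [hrepr]
  -- the coordinate derivations commute
  have hDD : ∀ (i j : Fin n) (g : B), D i (D j g) = D j (D i g) := by
    intro i j g
    have h0 : ⁅D i, D j⁆ = (0 : Derivation k B B) := by
      apply hext
      intro m
      rw [Derivation.commutator_apply, hD j m, hD i m]
      split_ifs <;> simp
    have := congrArg (fun d : Derivation k B B => d g) h0
    simp only [Derivation.commutator_apply] at this
    have : D i (D j g) - D j (D i g) = 0 := this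
    exact sub_eq_zero.mp this
  -- `D ℓ` kills the divergence of any `y` whose coefficients it kills
  have hDl_div : ∀ (y : Derivation k B B), (∀ i, D ℓ (y (x i)) = 0) → D ℓ (div y) = 0 := by
    intro y hy
    rw [hdiv' y, map_sum]
    refine Finset.sum_eq_zero fun i _ => ?_
    rw [hDD, hy, map_zero]
  -- unpack `P`
  have hPy' : ∀ y, P y → y (x ℓ) = 0 ∧ ∀ i, D ℓ (y (x i)) = 0 := by
    intro y hy
    obtain ⟨h1, h2⟩ := (hP y).1 hy
    refine ⟨by rw [← hrepr]; exact h1, fun i => by rw [← hrepr]; exact h2 i⟩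
  -- value of `σ y` on generators
  have hσval : ∀ (y : Derivation k B B) (j : Fin n),
      σ y (x j) = y (x j) - (if ℓ = j then div y * x ℓ else 0) := by
    intro y j
    rw [hσ]
    rw [Derivation.sub_apply, Derivation.smul_apply, hD, smul_eq_mul]
    split_ifs <;> ring
  -- `D ℓ (div y * x ℓ) = div y` if the coefficients of `y` are killed by `D ℓ`
  have hDla : ∀ (y : Derivation k B B), (∀ i, D ℓ (y (x i)) = 0) →
      D ℓ (div y * x ℓ) = div y := by
    intro y hy
    rw [Derivation.leibniz, hDl_div y hy, hD]
    simp
  -- Part 1: divergence of `σ y` vanishes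
  have part1 : ∀ y, P y → div (σ y) = 0 := by
    intro y hy
    obtain ⟨hy1, hy2⟩ := hPy' y hy
    rw [hdiv' (σ y)]
    have : ∀ i, D i (σ y (x i)) = D i (y (x i)) - (if ℓ = i then div y else 0) := by
      intro i
      rw [hσval, map_sub]
      congr 1
      split_ifs with h
      · subst h; exact hDla y hy2
      · simp
    rw [Finset.sum_congr rfl fun i _ => this i, Finset.sum_sub_distrib,
      Finset.sum_ite_eq, if_pos (Finset.mem_univ ℓ), ← hdiv' y]
    have := hDla y hy2
    -- div y - div y = 0
    ring
  -- Part 2: injectivity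
  have part2 : ∀ y z, P y → P z → σ y = σ z → y = z := by
    intro y z hy hz h
    obtain ⟨hy1, hy2⟩ := hPy' y hy
    obtain ⟨hz1, hz2⟩ := hPy' z hz
    apply hext
    intro j
    have := congrArg (fun d : Derivation k B B => d (x j)) h
    simp only [hσval] at this
    by_cases hj : ℓ = j
    · subst hj; rw [hy1, hz1]
    · simp only [if_neg hj, sub_zero] at this
      exact this
  -- the divergence identity: div ⁅y,z⁆ = y (div z) - z (div y)
  have keybr : ∀ (u v : Derivation k B B),
      ∑ i, (D i (u (v (x i))) - u (D i (v (x i))))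
        = ∑ i, ∑ j, D i (u (x j)) * D j (v (x i)) := by
    intro u v
    refine Finset.sum_congr rfl fun i _ => ?_
    have h1 : D i (u (v (x i))) - u (D i (v (x i))) = ⁅D i, u⁆ (v (x i)) := by
      rw [Derivation.commutator_apply]
    rw [h1, hexp ⁅D i, u⁆ (v (x i))]
    refine Finset.sum_congr rfl fun j _ => ?_
    congr 1
    rw [Derivation.commutator_apply, hD i j]
    split_ifs <;> simp
  have hdivbr : ∀ (y z : Derivation k B B), div ⁅y, z⁆ = y (div z) - z (div y) := by
    intro y z
    have e1 := keybr y z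
    have e2 := keybr z y
    have h1 : div ⁅y, z⁆ = ∑ i, (D i (y (z (x i))) - D i (z (y (x i)))) := by
      rw [hdiv' ⁅y, z⁆]
      refine Finset.sum_congr rfl fun i _ => ?_
      rw [Derivation.commutator_apply, map_sub]
    have h2 : y (div z) = ∑ i, y (D i (z (x i))) := by
      rw [hdiv' z, map_sum]
    have h3 : z (div y) = ∑ i, z (D i (y (x i))) := by
      rw [hdiv' y, map_sum]
    have h4 : (∑ i, ∑ j, D i (y (x j)) * D j (z (x i)))
        = ∑ i, ∑ j, D i (z (x j)) * D j (y (x i)) := by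
      rw [Finset.sum_comm]
      exact Finset.sum_congr rfl fun i _ => Finset.sum_congr rfl fun j _ => mul_comm _ _
    have h5 : ∑ i, (D i (y (z (x i))) - y (D i (z (x i))))
        = ∑ i, (D i (z (y (x i))) - z (D i (y (x i)))) := by rw [e1, e2, h4]
    rw [h1, h2, h3]
    rw [Finset.sum_sub_distrib] at h5 ⊢
    rw [Finset.sum_sub_distrib] at h5
    linear_combination h5
  -- Part 3: σ is a Lie algebra homomorphism on P
  have part3 : ∀ y z, P y → P z → σ ⁅y, z⁆ = ⁅σ y, σ z⁆ := by
    intro y z hy hz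
    obtain ⟨hy1, hy2⟩ := hPy' y hy
    obtain ⟨hz1, hz2⟩ := hPy' z hz
    apply hext
    intro j
    rw [Derivation.commutator_apply]
    by_cases hj : ℓ = j
    · subst hj
      -- values at x ℓ
      have hσyℓ : σ y (x ℓ) = -(div y * x ℓ) := by
        rw [hσval, if_pos rfl, hy1]; ring
      have hσzℓ : σ z (x ℓ) = -(div z * x ℓ) := by
        rw [hσval, if_pos rfl, hz1]; ring
      have hyc : y (div z * x ℓ) = x ℓ * y (div z) := by
        rw [Derivation.leibniz, smul_eq_mul, smul_eq_mul, hy1]; ring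
      have hza : z (div y * x ℓ) = x ℓ * z (div y) := by
        rw [Derivation.leibniz, smul_eq_mul, smul_eq_mul, hz1]; ring
      have hbrℓ : (⁅y, z⁆ : Derivation k B B) (x ℓ) = 0 := by
        rw [Derivation.commutator_apply, hy1, hz1, map_zero, map_zero, sub_zero]
      have hσyc : σ y (div z * x ℓ) = x ℓ * y (div z) - div y * x ℓ * div z := by
        rw [hσ, Derivation.sub_apply, Derivation.smul_apply, smul_eq_mul, hDla z hz2, hyc]
      have hσza : σ z (div y * x ℓ) = x ℓ * z (div y) - div z * x ℓ * div y := by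
        rw [hσ, Derivation.sub_apply, Derivation.smul_apply, smul_eq_mul, hDla y hy2, hza]
      rw [hσval, if_pos rfl, hbrℓ, hdivbr y z, hσzℓ, hσyℓ, map_neg, map_neg, hσyc, hσza]
      ring
    · -- off the ℓ-th generator everything is unchanged
      have hσzj : σ z (x j) = z (x j) := by rw [hσval, if_neg hj]; ring
      have hσyj : σ y (x j) = y (x j) := by rw [hσval, if_neg hj]; ring
      have h1 : σ y (z (x j)) = y (z (x j)) := by
        rw [hσ, Derivation.sub_apply, Derivation.smul_apply, hz2 j, smul_zero, sub_zero]
      have h2 : σ z (y (x j)) = z (y (x j)) := by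
        rw [hσ, Derivation.sub_apply, Derivation.smul_apply, hy2 j, smul_zero, sub_zero]
      rw [hσval, if_neg hj, Derivation.commutator_apply, hσzj, hσyj, h1, h2]
      ring
  exact ⟨part1, part2, part3⟩
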